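/- For every real ε > −2, the function w ↦ I(ε,w) is differentiable at w = 0 and its derivative there equals −4·(28 + ε·(12 + ε)) / ( 3·(2+ε)·(4+ε)²·(6+ε)² ). -/

import Mathlib

open MeasureTheory intervalIntegral Set

lemma ii_rpow_mul {a : ℝ} (ha : -1 < a) (g : ℝ → ℝ) (hg : Continuous g) :
    IntervalIntegrable (fun x => x ^ a * g x) volume 0 1 :=
  (intervalIntegral.intervalIntegrable_rpow' ha).mul_continuousOn hg.continuousOn

lemma beta1 {a : ℝ} (ha : -1 < a) :
    ∫ x in (0:ℝ)..1, x ^ a * (1 - x) = 1 / (a + 1) - 1 / (a + 2) := by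
  have h1 : (a:ℝ) + 1 ≠ 0 := by linarith
  have h2 : (a:ℝ) + 2 ≠ 0 := by linarith
  have key : EqOn (fun x : ℝ => x ^ a * (1 - x)) (fun x => x ^ a - x ^ (a + 1)) (uIcc 0 1) := by
    intro x _
    rcases eq_or_ne x 0 with rfl | hx
    · simp [Real.zero_rpow h1]
    · simp only []; rw [Real.rpow_add_one hx]; ring
  rw [intervalIntegral.integral_congr key,
    intervalIntegral.integral_sub (intervalIntegral.intervalIntegrable_rpow' ha)
      (intervalIntegral.intervalIntegrable_rpow' (by linarith)),
    integral_rpow (Or.inl ha), integral_rpow (Or.inl (by linarith : (-1:ℝ) < a + 1))]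
  rw [Real.one_rpow, Real.one_rpow, Real.zero_rpow h1, Real.zero_rpow (by linarith : a + 1 + 1 ≠ 0)]
  ring_nf


lemma beta2 {a : ℝ} (ha : -1 < a) :
    ∫ x in (0:ℝ)..1, x ^ a * (1 - x) ^ 2 = 1 / (a + 1) - 2 / (a + 2) + 1 / (a + 3) := by
  have h1 : (a:ℝ) + 1 ≠ 0 := by linarith
  have key : EqOn (fun x : ℝ => x ^ a * (1 - x) ^ 2)
      (fun x => (x ^ a - x ^ (a + 1)) - (x ^ (a+1) - x ^ (a + 2))) (uIcc 0 1) := by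
    intro x _
    rcases eq_or_ne x 0 with rfl | hx
    · simp [Real.zero_rpow h1, Real.zero_rpow (by linarith : a + 1 ≠ 0),
        Real.zero_rpow (by linarith : a + 2 ≠ 0)]
    · have e1 : x ^ (a + 1) = x ^ a * x := Real.rpow_add_one hx a
      have e2 : x ^ (a + 2) = x ^ a * x * x := by
        rw [show a + 2 = a + 1 + 1 by ring, Real.rpow_add_one hx, Real.rpow_add_one hx]
      simp only []; rw [e1, e2]; ring
  have i0 := intervalIntegral.intervalIntegrable_rpow' (a := 0) (b := 1) ha
  have i1 := intervalIntegral.intervalIntegrable_rpow' (a := 0) (b := 1) (by linarith : (-1:ℝ) < a + 1)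
  have i2 := intervalIntegral.intervalIntegrable_rpow' (a := 0) (b := 1) (by linarith : (-1:ℝ) < a + 2)
  rw [intervalIntegral.integral_congr key,
    intervalIntegral.integral_sub (i0.sub i1) (i1.sub i2),
    intervalIntegral.integral_sub i0 i1, intervalIntegral.integral_sub i1 i2,
    integral_rpow (Or.inl ha), integral_rpow (Or.inl (by linarith : (-1:ℝ) < a + 1)),
    integral_rpow (Or.inl (by linarith : (-1:ℝ) < a + 2))]
  rw [Real.one_rpow, Real.one_rpow, Real.one_rpow, Real.zero_rpow h1,
    Real.zero_rpow (by linarith : a + 1 + 1 ≠ 0), Real.zero_rpow (by linarith : a + 2 + 1 ≠ 0)]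
  ring_nf

lemma betaH1 {a : ℝ} (ha : -1 < a) :
    ∫ y in (0:ℝ)..1, (1 - y) ^ a * y = 1 / (a + 1) - 1 / (a + 2) := by
  have h := intervalIntegral.integral_comp_sub_left (a := 0) (b := 1) (fun u => u ^ a * (1 - u)) 1
  norm_num at h
  rw [← beta1 ha, ← h]

lemma betaH2 {a : ℝ} (ha : -1 < a) :
    ∫ y in (0:ℝ)..1, (1 - y) ^ a * y ^ 2 = 1 / (a + 1) - 2 / (a + 2) + 1 / (a + 3) := by
  have h := intervalIntegral.integral_comp_sub_left (a := 0) (b := 1) (fun u => u ^ a * (1 - u) ^ 2) 1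
  norm_num at h
  rw [← beta2 ha, ← h]

lemma iiH {a : ℝ} (ha : -1 < a) (g : ℝ → ℝ) (hg : Continuous g) :
    IntervalIntegrable (fun y => (1 - y) ^ a * g y) volume 0 1 := by
  have h : IntervalIntegrable (fun y : ℝ => (1 - y) ^ a) volume 0 1 := by
    have h0 := (intervalIntegral.intervalIntegrable_rpow' (a := 0) (b := 1) ha).comp_sub_left 1
    norm_num at h0
    exact h0.symm
  exact h.mul_continuousOn hg.continuousOn

lemma integrableOn_F1 {a : ℝ} (ha : -1 < a) :
    IntegrableOn (fun x : ℝ => x ^ a * (1 - x)) (Ioc 0 1) volume := by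
  rw [← intervalIntegrable_iff_integrableOn_Ioc_of_le zero_le_one]
  exact ii_rpow_mul ha _ (by continuity)

lemma integrableOn_xF1 {a : ℝ} (ha : -1 < a) :
    IntegrableOn (fun x : ℝ => x * (x ^ a * (1 - x))) (Ioc 0 1) volume := by
  rw [← intervalIntegrable_iff_integrableOn_Ioc_of_le zero_le_one]
  have := (ii_rpow_mul ha (fun x => 1 - x) (by continuity)).mul_continuousOn
    (continuous_id.continuousOn (s := uIcc 0 1))
  refine this.congr (fun x _ => ?_)
  simp only [id]; ring

lemma integrableOn_H1 {a : ℝ} (ha : -1 < a) :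
    IntegrableOn (fun y : ℝ => (1 - y) ^ a * y) (Ioc 0 1) volume := by
  rw [← intervalIntegrable_iff_integrableOn_Ioc_of_le zero_le_one]
  exact iiH ha _ continuous_id

lemma integrableOn_yH1 {a : ℝ} (ha : -1 < a) :
    IntegrableOn (fun y : ℝ => y * ((1 - y) ^ a * y)) (Ioc 0 1) volume := by
  rw [← intervalIntegrable_iff_integrableOn_Ioc_of_le zero_le_one]
  have := iiH ha (fun y => y * y) (by continuity)
  refine this.congr (fun x _ => ?_)
  ring

lemma phi_integrable {a : ℝ} (ha : -1 < a) :
    Integrable (fun p : ℝ × ℝ => (p.1 ^ a * (1 - p.1)) * ((1 - p.2) ^ a * p.2))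
      ((volume.restrict (Ioc 0 1)).prod (volume.restrict (Ioc 0 1))) :=
  (integrableOn_F1 ha).mul_prod (integrableOn_H1 ha)

lemma meas_test {a w : ℝ} : Measurable (fun p : ℝ × ℝ =>
    Real.exp (p.1 * p.2 * w) * ((p.1 ^ a * (1 - p.1)) * ((1 - p.2) ^ a * p.2))) := by
  fun_prop

lemma ae_mem_square :
    ∀ᵐ p : ℝ × ℝ ∂((volume.restrict (Ioc 0 1)).prod (volume.restrict (Ioc 0 1))),
      p.1 ∈ Ioc (0:ℝ) 1 ∧ p.2 ∈ Ioc (0:ℝ) 1 := by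
  rw [Measure.prod_restrict]
  filter_upwards [ae_restrict_mem (measurableSet_Ioc.prod measurableSet_Ioc)] with p hp
  exact hp

lemma hasDerivAt_B {a : ℝ} (ha : -1 < a) :
    HasDerivAt (fun w : ℝ => ∫ p : ℝ × ℝ,
        Real.exp (p.1 * p.2 * w) * ((p.1 ^ a * (1 - p.1)) * ((1 - p.2) ^ a * p.2))
        ∂((volume.restrict (Ioc 0 1)).prod (volume.restrict (Ioc 0 1))))
      ((1/(a+2) - 1/(a+3)) * (1/(a+1) - 2/(a+2) + 1/(a+3))) 0 := by
  set μ := (volume.restrict (Ioc (0:ℝ) 1)).prod (volume.restrict (Ioc (0:ℝ) 1)) with hμ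
  set φ : ℝ × ℝ → ℝ := fun p => (p.1 ^ a * (1 - p.1)) * ((1 - p.2) ^ a * p.2) with hφ
  have key := hasDerivAt_integral_of_dominated_loc_of_deriv_le (μ := μ) (x₀ := (0:ℝ))
    (F := fun w p => Real.exp (p.1 * p.2 * w) * φ p)
    (F' := fun w p => Real.exp (p.1 * p.2 * w) * (p.1 * p.2) * φ p)
    (bound := fun p => Real.exp 1 * |φ p|)
    (s := Metric.ball 0 1) (Metric.ball_mem_nhds _ one_pos)
    (Filter.Eventually.of_forall fun w => (meas_test (a := a) (w := w)).aestronglyMeasurable)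
    (by simpa using phi_integrable ha)
    (by
      apply Measurable.aestronglyMeasurable
      fun_prop)
    (by
      filter_upwards [ae_mem_square] with p hp w hw
      obtain ⟨⟨h1, h2⟩, ⟨h3, h4⟩⟩ := hp
      have hball : |w| < 1 := by simpa [Real.dist_eq] using hw
      have hexp : Real.exp (p.1 * p.2 * w) ≤ Real.exp 1 := by
        apply Real.exp_le_exp.2
        have hp12 : p.1 * p.2 ≤ 1 := by nlinarith
        have hw1 : p.1 * p.2 * w ≤ p.1 * p.2 * |w| :=
          mul_le_mul_of_nonneg_left (le_abs_self w) (by positivity)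
        nlinarith [abs_nonneg w, mul_pos h1 h3]
      have h12 : |p.1 * p.2| ≤ 1 := by
        rw [abs_mul, abs_of_pos h1, abs_of_pos h3]; nlinarith
      calc ‖Real.exp (p.1 * p.2 * w) * (p.1 * p.2) * φ p‖
          = Real.exp (p.1 * p.2 * w) * |p.1 * p.2| * |φ p| := by
            rw [norm_mul, norm_mul, Real.norm_eq_abs, Real.norm_eq_abs, Real.norm_eq_abs,
              abs_of_pos (Real.exp_pos _)]
        _ ≤ Real.exp 1 * 1 * |φ p| := by
            apply mul_le_mul_of_nonneg_right _ (abs_nonneg _)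
            exact mul_le_mul hexp h12 (abs_nonneg _) (Real.exp_pos _).le
        _ = Real.exp 1 * |φ p| := by ring)
    ((phi_integrable ha).abs.const_mul _)
    (by
      refine Filter.Eventually.of_forall fun p => fun w _ => ?_
      have h0 : HasDerivAt (fun y : ℝ => p.1 * p.2 * y) (p.1 * p.2) w := by
        simpa using (hasDerivAt_id w).const_mul (p.1 * p.2)
      have h := (h0.exp).mul_const (φ p)
      convert h using 1)
  have h2 := key.2
  have : (∫ p : ℝ × ℝ, Real.exp (p.1 * p.2 * 0) * (p.1 * p.2) * φ p ∂μ)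
      = (1/(a+2) - 1/(a+3)) * (1/(a+1) - 2/(a+2) + 1/(a+3)) := by
    have e1 : ∀ p : ℝ × ℝ, Real.exp (p.1 * p.2 * 0) * (p.1 * p.2) * φ p
        = (p.1 * (p.1 ^ a * (1 - p.1))) * (p.2 * ((1 - p.2) ^ a * p.2)) := by
      intro p; simp [hφ]; ring
    rw [show (∫ p : ℝ × ℝ, Real.exp (p.1 * p.2 * 0) * (p.1 * p.2) * φ p ∂μ)
        = ∫ p : ℝ × ℝ, (p.1 * (p.1 ^ a * (1 - p.1))) * (p.2 * ((1 - p.2) ^ a * p.2)) ∂μ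
      from integral_congr_ae (Filter.Eventually.of_forall e1)]
    rw [hμ, MeasureTheory.integral_prod_mul (f := fun x : ℝ => x * (x ^ a * (1 - x)))
      (g := fun y : ℝ => y * ((1 - y) ^ a * y))]
    congr 1
    · rw [← intervalIntegral.integral_of_le zero_le_one]
      have e2 : EqOn (fun x : ℝ => x * (x ^ a * (1 - x))) (fun x => x ^ (a+1) * (1 - x)) (uIcc 0 1) := by
        intro x _
        rcases eq_or_ne x 0 with rfl | hx
        · simp [Real.zero_rpow (by linarith : a + 1 ≠ 0)]
        · simp only []; rw [Real.rpow_add_one hx]; ring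
      rw [intervalIntegral.integral_congr e2, beta1 (by linarith : (-1:ℝ) < a + 1)]
      ring_nf
    · rw [← intervalIntegral.integral_of_le zero_le_one]
      have e3 : EqOn (fun y : ℝ => y * ((1 - y) ^ a * y)) (fun y => (1 - y) ^ a * y ^ 2) (uIcc 0 1) := by
        intro y _; simp only []; ring
      rw [intervalIntegral.integral_congr e3, betaH2 ha]
  rwa [this] at h2

lemma fw_integrable {a : ℝ} (ha : -1 < a) (w : ℝ) :
    Integrable (fun p : ℝ × ℝ =>
        Real.exp (p.1 * p.2 * w) * ((p.1 ^ a * (1 - p.1)) * ((1 - p.2) ^ a * p.2)))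
      ((volume.restrict (Ioc 0 1)).prod (volume.restrict (Ioc 0 1))) := by
  refine ((phi_integrable ha).abs.const_mul (Real.exp |w|)).mono'
    (meas_test.aestronglyMeasurable) ?_
  filter_upwards [ae_mem_square] with p hp
  obtain ⟨⟨h1, h2⟩, ⟨h3, h4⟩⟩ := hp
  have hexp : Real.exp (p.1 * p.2 * w) ≤ Real.exp |w| := by
    apply Real.exp_le_exp.2
    have hp12 : p.1 * p.2 ≤ 1 := by nlinarith
    have hw1 : p.1 * p.2 * w ≤ p.1 * p.2 * |w| :=
      mul_le_mul_of_nonneg_left (le_abs_self w) (by positivity)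
    nlinarith [abs_nonneg w, mul_pos h1 h3]
  rw [norm_mul, Real.norm_eq_abs, Real.norm_eq_abs, abs_of_pos (Real.exp_pos _)]
  exact mul_le_mul_of_nonneg_right hexp (abs_nonneg _)

lemma iter_eq_prod {a : ℝ} (ha : -1 < a) (w : ℝ) :
    (∫ x in (0:ℝ)..1, ∫ y in (0:ℝ)..1,
        Real.exp (x * y * w) * ((x ^ a * (1 - x)) * ((1 - y) ^ a * y)))
    = ∫ p : ℝ × ℝ, Real.exp (p.1 * p.2 * w) * ((p.1 ^ a * (1 - p.1)) * ((1 - p.2) ^ a * p.2))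
        ∂((volume.restrict (Ioc 0 1)).prod (volume.restrict (Ioc 0 1))) := by
  rw [MeasureTheory.integral_prod _ (fw_integrable ha w)]
  simp only [intervalIntegral.integral_of_le zero_le_one]

lemma B_zero {a : ℝ} (ha : -1 < a) :
    (∫ p : ℝ × ℝ, Real.exp (p.1 * p.2 * 0) * ((p.1 ^ a * (1 - p.1)) * ((1 - p.2) ^ a * p.2))
        ∂((volume.restrict (Ioc 0 1)).prod (volume.restrict (Ioc 0 1))))
    = (1/(a+1) - 1/(a+2)) * (1/(a+1) - 1/(a+2)) := by
  simp only [mul_zero, Real.exp_zero, one_mul]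
  rw [MeasureTheory.integral_prod_mul (f := fun x : ℝ => x ^ a * (1 - x))
      (g := fun y : ℝ => (1 - y) ^ a * y),
    ← intervalIntegral.integral_of_le zero_le_one,
    ← intervalIntegral.integral_of_le zero_le_one, beta1 ha, betaH1 ha]

lemma zint : ∫ z in (0:ℝ)..1, (z - z ^ 2) = 1/6 := by
  rw [intervalIntegral.integral_sub intervalIntegrable_id (intervalIntegral.intervalIntegrable_pow 2),
    integral_id, integral_pow]
  norm_num

/-- The derivative at `w = 0` of `w ↦ I(ε,w)`: the coefficient of `w¹` in the power series
expansion at `w = 0` used as initial condition by cmAZExpandedDirectIntegrate. -/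
theorem triple_integral_derivative_at_zero
    (I : ℝ → ℝ → ℝ)
    (hI : ∀ (ε w : ℝ), I ε w =
      ∫ x in (0 : ℝ)..1, ∫ y in (0 : ℝ)..1, ∫ z in (0 : ℝ)..1,
        Real.exp (x * y * w) * ((1 - w) * x * (1 - y)) ^ (ε / 2) *
          ((1 - w) * y * (1 - x) * z * (1 - z))) :
    ∀ ε : ℝ, -2 < ε →
      HasDerivAt (fun w : ℝ => I ε w)
        (-4 * (28 + ε * (12 + ε)) / (3 * (2 + ε) * (4 + ε) ^ 2 * (6 + ε) ^ 2)) 0 := by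
  intro ε hε
  set a : ℝ := ε / 2 with ha_def
  have ha : -1 < a := by rw [ha_def]; linarith
  set B : ℝ → ℝ := fun w => ∫ p : ℝ × ℝ,
      Real.exp (p.1 * p.2 * w) * ((p.1 ^ a * (1 - p.1)) * ((1 - p.2) ^ a * p.2))
      ∂((volume.restrict (Ioc 0 1)).prod (volume.restrict (Ioc 0 1))) with hB
  -- derivative of the auxiliary function
  have hA : HasDerivAt (fun w : ℝ => (1 - w) ^ (a + 1)) (-(a + 1)) 0 := by
    have h1 : HasDerivAt (fun w : ℝ => 1 - w) (-1) 0 := by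
      simpa using (hasDerivAt_id (0:ℝ)).const_sub 1
    have h2 := h1.rpow_const (p := a + 1) (Or.inl (by norm_num))
    simpa using h2
  have hBd : HasDerivAt B ((1/(a+2) - 1/(a+3)) * (1/(a+1) - 2/(a+2) + 1/(a+3))) 0 :=
    hasDerivAt_B ha
  have hJ := (hA.mul_const (1/6 : ℝ)).mul hBd
  -- the eventual equality
  have hev : (fun w : ℝ => I ε w) =ᶠ[nhds 0] fun w => (1 - w) ^ (a + 1) * (1/6) * B w := by
    filter_upwards [Iio_mem_nhds (by norm_num : (0:ℝ) < 1)] with w hw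
    have hw' : (0:ℝ) < 1 - w := by simp only [mem_Iio] at hw; linarith
    rw [hI]
    have step : (∫ x in (0 : ℝ)..1, ∫ y in (0 : ℝ)..1, ∫ z in (0 : ℝ)..1,
        Real.exp (x * y * w) * ((1 - w) * x * (1 - y)) ^ (ε / 2) *
          ((1 - w) * y * (1 - x) * z * (1 - z)))
        = ∫ x in (0 : ℝ)..1, ∫ y in (0 : ℝ)..1, ((1 - w) ^ (a + 1) * (1/6)) *
            (Real.exp (x * y * w) * ((x ^ a * (1 - x)) * ((1 - y) ^ a * y))) := by
      refine intervalIntegral.integral_congr fun x hx => ?_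
      refine intervalIntegral.integral_congr fun y hy => ?_
      rw [uIcc_of_le zero_le_one] at hx hy
      rw [show (fun z : ℝ => Real.exp (x * y * w) * ((1 - w) * x * (1 - y)) ^ (ε / 2) *
          ((1 - w) * y * (1 - x) * z * (1 - z)))
          = fun z : ℝ => (Real.exp (x * y * w) * ((1 - w) * x * (1 - y)) ^ (ε / 2) *
            ((1 - w) * y * (1 - x))) * (z - z ^ 2) from funext fun z => by ring]
      rw [intervalIntegral.integral_const_mul, zint]
      rw [show ((1 - w) * x * (1 - y)) ^ (ε / 2) = ((1 - w) * x * (1 - y)) ^ a from rfl]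
      rw [Real.mul_rpow (mul_nonneg hw'.le hx.1) (by linarith [hy.2]),
        Real.mul_rpow hw'.le hx.1, Real.rpow_add_one hw'.ne' a]
      ring
    rw [step]
    simp only [intervalIntegral.integral_const_mul]
    rw [iter_eq_prod ha w]
  refine HasDerivAt.congr_of_eventuallyEq ?_ hev
  have hB0 : B 0 = (1/(a+1) - 1/(a+2)) * (1/(a+1) - 1/(a+2)) := by
    rw [hB]; exact B_zero ha
  -- identify derivative values
  convert hJ using 1
  · rfl
  · rfl
  rw [hB0]
  have e1 : a + 1 = (2 + ε)/2 := by rw [ha_def]; ring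
  have e2 : a + 2 = (4 + ε)/2 := by rw [ha_def]; ring
  have e3 : a + 3 = (6 + ε)/2 := by rw [ha_def]; ring
  have n1 : (2:ℝ) + ε ≠ 0 := by linarith
  have n2 : (4:ℝ) + ε ≠ 0 := by linarith
  have n3 : (6:ℝ) + ε ≠ 0 := by linarith
  simp only [sub_zero, Real.one_rpow, e1, e2, e3]
  field_simp
  ring
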